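/- arXiv:1407.7022 — 3 statements merged into one kernel-verified Lean document; each statement's English description precedes it below -/
import Mathlib

section
/- Let Ω, Ω' be compact subsets of ℝ^d and μ a finite nonnegative measure on Ω. Let (T_n) be maps Ω → Ω' and T : Ω → Ω'. If the plans γ_{T_n} = (id × T_n)_#μ converge weakly (in duality with continuous bounded functions on Ω × Ω') to γ_T = (id × T)_#μ, then T_n → T strongly in L²(Ω, μ; ℝ^d). -/
open MeasureTheory Filter Topology BoundedContinuousFunction RealInnerProductSpace

noncomputable def clampBCF {α : Type*} [TopologicalSpace α] (g : C(α, ℝ)) (C : ℝ) :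
    BoundedContinuousFunction α ℝ :=
  BoundedContinuousFunction.mkOfBound
    ⟨fun x => max (-C) (min C (g x)), by fun_prop⟩ (2 * |C|) (by
      intro x y
      have h1 : ∀ t : ℝ, -|C| ≤ max (-C) (min C t) ∧ max (-C) (min C t) ≤ |C| := by
        intro t
        constructor
        · exact le_trans (by simpa using le_abs_self C) (le_max_left _ _)
        · exact max_le (by simpa using neg_le_abs C) ((min_le_left _ _).trans (le_abs_self C))
      simp only [ContinuousMap.coe_mk]
      rw [Real.dist_eq, abs_sub_le_iff]
      obtain ⟨a1, a2⟩ := h1 (g x)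
      obtain ⟨b1, b2⟩ := h1 (g y)
      constructor <;> linarith)

@[simp] lemma clampBCF_apply {α : Type*} [TopologicalSpace α] (g : C(α, ℝ)) (C : ℝ) (x : α) :
    clampBCF g C x = max (-C) (min C (g x)) := rfl

lemma clampBCF_eq_self {α : Type*} [TopologicalSpace α] (g : C(α, ℝ)) {C : ℝ} {x : α}
    (h : |g x| ≤ C) : clampBCF g C x = g x := by
  rw [clampBCF_apply, min_eq_right (le_of_abs_le h), max_eq_right (neg_le_of_abs_le h)]

theorem stmt0 {d : ℕ}
    (Ω Ω' : Set (EuclideanSpace ℝ (Fin d)))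
    (hΩ : IsCompact Ω) (hΩ' : IsCompact Ω')
    (μ : Measure (EuclideanSpace ℝ (Fin d))) [IsFiniteMeasure μ]
    (hμΩ : μ Ωᶜ = 0)
    (T : ℕ → EuclideanSpace ℝ (Fin d) → EuclideanSpace ℝ (Fin d))
    (S : EuclideanSpace ℝ (Fin d) → EuclideanSpace ℝ (Fin d))
    (hT : ∀ n, ∀ x ∈ Ω, T n x ∈ Ω') (hS : ∀ x ∈ Ω, S x ∈ Ω')
    (hTm : ∀ n, Measurable (T n)) (hSm : Measurable S)
    (hweak : ∀ f : BoundedContinuousFunction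
        (EuclideanSpace ℝ (Fin d) × EuclideanSpace ℝ (Fin d)) ℝ,
      Tendsto (fun n => ∫ x, f (x, T n x) ∂μ) atTop (𝓝 (∫ x, f (x, S x) ∂μ))) :
    Tendsto (fun n => ∫ x, ‖T n x - S x‖ ^ 2 ∂μ) atTop (𝓝 0) := by
  obtain ⟨M, hM0, hM⟩ : ∃ M : ℝ, 0 ≤ M ∧ ∀ y ∈ Ω', ‖y‖ ≤ M := by
    obtain ⟨C, hC⟩ := hΩ'.isBounded.exists_norm_le
    exact ⟨max C 0, le_max_right _ _, fun y hy => (hC y hy).trans (le_max_left _ _)⟩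
  have haeΩ : ∀ᵐ x ∂μ, x ∈ Ω := by
    rw [ae_iff]
    simpa [Set.compl_def] using hμΩ
  have hSb : ∀ᵐ x ∂μ, ‖S x‖ ≤ M := haeΩ.mono fun x hx => hM _ (hS x hx)
  have hTb : ∀ n, ∀ᵐ x ∂μ, ‖T n x‖ ≤ M := fun n => haeΩ.mono fun x hx => hM _ (hT n x hx)
  have hSint : Integrable S μ := (integrable_const M).mono' hSm.aestronglyMeasurable hSb
  have hTnormsq : ∀ n, Integrable (fun x => ‖T n x‖ ^ 2) μ := fun n =>
    (integrable_const (M ^ 2)).mono' ((hTm n).norm.pow_const 2).aestronglyMeasurable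
      ((hTb n).mono fun x hx => by
        rw [Real.norm_eq_abs, abs_of_nonneg (by positivity)]
        exact pow_le_pow_left₀ (norm_nonneg _) hx 2)
  have hSnormsq : Integrable (fun x => ‖S x‖ ^ 2) μ :=
    (integrable_const (M ^ 2)).mono' (hSm.norm.pow_const 2).aestronglyMeasurable
      (hSb.mono fun x hx => by
        rw [Real.norm_eq_abs, abs_of_nonneg (by positivity)]
        exact pow_le_pow_left₀ (norm_nonneg _) hx 2)
  have hcross : ∀ n, Integrable (fun x => ⟪S x, T n x⟫) μ := fun n =>
    (integrable_const (M * M)).mono' (hSm.inner (hTm n)).aestronglyMeasurable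
      (((hTb n).and hSb).mono fun x ⟨h1, h2⟩ => by
        rw [Real.norm_eq_abs]
        calc |⟪S x, T n x⟫| ≤ ‖S x‖ * ‖T n x‖ := abs_real_inner_le_norm _ _
          _ ≤ M * M := mul_le_mul h2 h1 (norm_nonneg _) hM0)
  set L := ∫ x, ‖S x‖ ^ 2 ∂μ with hL
  -- Step A
  have hA : Tendsto (fun n => ∫ x, ‖T n x‖ ^ 2 ∂μ) atTop (𝓝 L) := by
    set f1 := clampBCF (⟨fun p : EuclideanSpace ℝ (Fin d) × EuclideanSpace ℝ (Fin d) =>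
      ‖p.2‖ ^ 2, by fun_prop⟩) (M ^ 2) with hf1
    have key := hweak f1
    have eq1 : ∀ (R : EuclideanSpace ℝ (Fin d) → EuclideanSpace ℝ (Fin d)),
        (∀ᵐ x ∂μ, ‖R x‖ ≤ M) → ∫ x, f1 (x, R x) ∂μ = ∫ x, ‖R x‖ ^ 2 ∂μ := by
      intro R hR
      refine integral_congr_ae (hR.mono fun x hx => ?_)
      refine clampBCF_eq_self _ ?_
      simp only [ContinuousMap.coe_mk]
      rw [abs_of_nonneg (by positivity)]
      exact pow_le_pow_left₀ (norm_nonneg _) hx 2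
    rw [eq1 S hSb] at key
    exact key.congr fun n => eq1 (T n) (hTb n)
  -- Step B
  have hB : Tendsto (fun n => ∫ x, ⟪S x, T n x⟫ ∂μ) atTop (𝓝 L) := by
    rw [Metric.tendsto_atTop]
    intro ε hε
    set δ := ε / (2 * M + 2) with hδdef
    have hδ : 0 < δ := by positivity
    obtain ⟨φ, hφ, hφint⟩ := hSint.exists_boundedContinuous_integral_sub_le hδ
    have hdiffint : Integrable (fun x => ‖S x - φ x‖) μ := (hSint.sub (φ.integrable μ)).norm
    set C := ‖φ‖ * M with hC
    have hinnφ : ∀ (R : EuclideanSpace ℝ (Fin d) → EuclideanSpace ℝ (Fin d))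
        (x : EuclideanSpace ℝ (Fin d)), ‖R x‖ ≤ M → |⟪φ x, R x⟫| ≤ C := by
      intro R x hx
      calc |⟪φ x, R x⟫| ≤ ‖φ x‖ * ‖R x‖ := abs_real_inner_le_norm _ _
        _ ≤ ‖φ‖ * M := mul_le_mul (φ.norm_coe_le_norm x) hx (norm_nonneg _) (norm_nonneg _)
    have hφcross : ∀ n, Integrable (fun x => ⟪φ x, T n x⟫) μ := fun n =>
      (integrable_const C).mono' (φ.continuous.measurable.inner (hTm n)).aestronglyMeasurable
        ((hTb n).mono fun x hx => by
          rw [Real.norm_eq_abs]; exact hinnφ (T n) x hx)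
    have hφS : Integrable (fun x => ⟪φ x, S x⟫) μ :=
      (integrable_const C).mono' (φ.continuous.measurable.inner hSm).aestronglyMeasurable
        (hSb.mono fun x hx => by
          rw [Real.norm_eq_abs]; exact hinnφ S x hx)
    set f2 := clampBCF (⟨fun p : EuclideanSpace ℝ (Fin d) × EuclideanSpace ℝ (Fin d) =>
      ⟪φ p.1, p.2⟫, Continuous.inner (φ.continuous.comp continuous_fst) continuous_snd⟩) C
      with hf2
    have key := hweak f2
    have eq2 : ∀ (R : EuclideanSpace ℝ (Fin d) → EuclideanSpace ℝ (Fin d)),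
        (∀ᵐ x ∂μ, ‖R x‖ ≤ M) → ∫ x, f2 (x, R x) ∂μ = ∫ x, ⟪φ x, R x⟫ ∂μ := by
      intro R hR
      refine integral_congr_ae (hR.mono fun x hx => ?_)
      refine clampBCF_eq_self _ ?_
      simp only [ContinuousMap.coe_mk]
      exact hinnφ R x hx
    rw [eq2 S hSb] at key
    have key2 := key.congr fun n => eq2 (T n) (hTb n)
    obtain ⟨N, hN⟩ := (Metric.tendsto_atTop.1 key2) δ hδ
    refine ⟨N, fun n hn => ?_⟩
    have hbound : ∀ (R : EuclideanSpace ℝ (Fin d) → EuclideanSpace ℝ (Fin d)),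
        (∀ᵐ x ∂μ, ‖R x‖ ≤ M) →
        Integrable (fun x => ⟪S x, R x⟫) μ → Integrable (fun x => ⟪φ x, R x⟫) μ →
        |(∫ x, ⟪S x, R x⟫ ∂μ) - ∫ x, ⟪φ x, R x⟫ ∂μ| ≤ M * δ := by
      intro R hRb h1 h2
      rw [← integral_sub h1 h2]
      calc |∫ x, (⟪S x, R x⟫ - ⟪φ x, R x⟫) ∂μ|
          ≤ ∫ x, |⟪S x, R x⟫ - ⟪φ x, R x⟫| ∂μ := by
            simpa [Real.norm_eq_abs] using
              norm_integral_le_integral_norm (μ := μ) (fun x => ⟪S x, R x⟫ - ⟪φ x, R x⟫)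
        _ ≤ ∫ x, ‖S x - φ x‖ * M ∂μ := by
            refine integral_mono_ae (h1.sub h2).abs (hdiffint.mul_const M)
              (hRb.mono fun x hx => ?_)
            show |⟪S x, R x⟫ - ⟪φ x, R x⟫| ≤ ‖S x - φ x‖ * M
            rw [← inner_sub_left]
            calc |⟪S x - φ x, R x⟫| ≤ ‖S x - φ x‖ * ‖R x‖ := abs_real_inner_le_norm _ _
              _ ≤ ‖S x - φ x‖ * M := mul_le_mul_of_nonneg_left hx (norm_nonneg _)
        _ = (∫ x, ‖S x - φ x‖ ∂μ) * M := integral_mul_const _ _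
        _ ≤ δ * M := mul_le_mul_of_nonneg_right hφ hM0
        _ = M * δ := mul_comm _ _
    have hb1 := hbound (T n) (hTb n) (hcross n) (hφcross n)
    have hSS : Integrable (fun x => ⟪S x, S x⟫) μ := by
      have : (fun x => ⟪(S x : EuclideanSpace ℝ (Fin d)), S x⟫) = fun x => ‖S x‖ ^ 2 := by
        funext x; exact real_inner_self_eq_norm_sq _
      rw [this]; exact hSnormsq
    have hLeq : L = ∫ x, ⟪S x, S x⟫ ∂μ := by
      rw [hL]
      exact integral_congr_ae (Eventually.of_forall fun x =>
        (real_inner_self_eq_norm_sq (S x)).symm)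
    have hb2 : |(∫ x, ⟪S x, S x⟫ ∂μ) - ∫ x, ⟪φ x, S x⟫ ∂μ| ≤ M * δ := hbound S hSb hSS hφS
    have hcn := hN n hn
    rw [Real.dist_eq] at hcn ⊢
    have h2M : (2 * M + 2) * δ = ε := by
      rw [hδdef]; field_simp
    have tri1 := abs_sub_le (∫ x, ⟪S x, T n x⟫ ∂μ) (∫ x, ⟪φ x, T n x⟫ ∂μ) L
    have tri2 := abs_sub_le (∫ x, ⟪φ x, T n x⟫ ∂μ) (∫ x, ⟪φ x, S x⟫ ∂μ) L
    have hb2' : |(∫ x, ⟪φ x, S x⟫ ∂μ) - L| ≤ M * δ := by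
      rw [hLeq, abs_sub_comm]; exact hb2
    linarith
  -- Step C
  have hsum : Tendsto (fun n => (∫ x, ‖T n x‖ ^ 2 ∂μ) - 2 * (∫ x, ⟪S x, T n x⟫ ∂μ) + L)
      atTop (𝓝 (L - 2 * L + L)) := (hA.sub (hB.const_mul 2)).add tendsto_const_nhds
  have hz : L - 2 * L + L = 0 := by ring
  rw [hz] at hsum
  refine hsum.congr fun n => ?_
  have hi2 : Integrable (fun x => 2 * ⟪S x, T n x⟫) μ := (hcross n).const_mul 2
  have hi1 : Integrable (fun x => ‖T n x‖ ^ 2 - 2 * ⟪S x, T n x⟫) μ := (hTnormsq n).sub hi2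
  have e : ∫ x, ‖T n x - S x‖ ^ 2 ∂μ
      = ∫ x, (‖T n x‖ ^ 2 - 2 * ⟪S x, T n x⟫ + ‖S x‖ ^ 2) ∂μ := by
    refine integral_congr_ae (Eventually.of_forall fun x => ?_)
    dsimp only
    rw [norm_sub_sq_real, real_inner_comm]
  rw [e, integral_add hi1 hSnormsq, integral_sub (hTnormsq n) hi2, integral_const_mul, hL]
end

section
/- Let I be a bounded interval, μ an atomless probability measure on I, ν a probability measure on ℝ, and h : ℝ → ℝ convex. Then the unique nondecreasing map T : I → ℝ with T_#μ = ν minimizes ∫_I h(T(x) - x) dμ(x) among all maps S : I → ℝ with S_#μ = ν. -/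
open MeasureTheory Set Filter Topology

/-- The right derivative of a function, as an infimum of right slopes. -/
noncomputable def rdAux (h : ℝ → ℝ) (s : ℝ) : ℝ :=
  sInf ((fun y => (h y - h s) / (y - s)) '' Set.Ioi s)

section rdAux

variable {h : ℝ → ℝ} (hc : ConvexOn ℝ Set.univ h)
include hc

lemma slope_mono' {x y z : ℝ} (hxy : x < y) (hyz : y < z) :
    (h y - h x) / (y - x) ≤ (h z - h y) / (z - y) :=
  hc.slope_mono_adjacent (Set.mem_univ _) (Set.mem_univ _) hxy hyz

lemma rdAux_bddBelow (s : ℝ) :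
    BddBelow ((fun y => (h y - h s) / (y - s)) '' Set.Ioi s) := by
  refine ⟨(h s - h (s - 1)) / (s - (s - 1)), ?_⟩
  rintro _ ⟨y, hy, rfl⟩
  exact slope_mono' hc (by linarith) hy

lemma rdAux_le_slope {s y : ℝ} (hy : s < y) : rdAux h s ≤ (h y - h s) / (y - s) :=
  csInf_le (rdAux_bddBelow hc s) ⟨y, hy, rfl⟩

lemma slope_le_rdAux {u v : ℝ} (huv : u < v) : (h v - h u) / (v - u) ≤ rdAux h v := by
  refine le_csInf ⟨_, ⟨v + 1, by simp, rfl⟩⟩ ?_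
  rintro _ ⟨y, hy, rfl⟩
  exact slope_mono' hc huv hy

lemma rdAux_mono : Monotone (rdAux h) := by
  intro s t hst
  rcases eq_or_lt_of_le hst with rfl | hst
  · exact le_refl _
  · exact (rdAux_le_slope hc hst).trans (slope_le_rdAux hc hst)

lemma rdAux_hasDerivWithinAt (s : ℝ) : HasDerivWithinAt h (rdAux h s) (Set.Ioi s) s := by
  rw [hasDerivWithinAt_iff_tendsto_slope]
  have hds : Set.Ioi s \ {s} = Set.Ioi s := Set.diff_singleton_eq_self (by simp)
  rw [hds]
  have himg : slope h s '' Set.Ioi s = (fun y => (h y - h s) / (y - s)) '' Set.Ioi s := by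
    apply Set.image_congr
    intro y _
    rw [slope_def_field]
  have hmono : MonotoneOn (slope h s) (Set.Ioi s) :=
    (hc.slope_mono (Set.mem_univ s)).mono (by intro y hy; exact ⟨trivial, ne_of_gt hy⟩)
  have hbdd : BddBelow (slope h s '' Set.Ioi s) := by
    rw [himg]; exact rdAux_bddBelow hc s
  have := hmono.tendsto_nhdsGT hbdd
  rw [himg] at this
  exact this

lemma rdAux_slope_bounds {c d u v : ℝ} (hcu : c < u) (huv : u < v) (hvd : v < d) :
    rdAux h c ≤ (h v - h u) / (v - u) ∧ (h v - h u) / (v - u) ≤ rdAux h d := by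
  constructor
  · exact (rdAux_le_slope hc hcu).trans (slope_mono' hc hcu huv)
  · exact (slope_mono' hc huv hvd).trans (slope_le_rdAux hc hvd)

lemma rdAux_continuousOn (u v : ℝ) : ContinuousOn h (Set.Icc u v) := by
  set K : ℝ := max |rdAux h (u - 1)| |rdAux h (v + 1)| with hK
  have hK0 : 0 ≤ K := le_trans (abs_nonneg _) (le_max_left _ _)
  have key : ∀ x ∈ Set.Icc u v, ∀ y ∈ Set.Icc u v, dist (h x) (h y) ≤ K * dist x y := by
    have main : ∀ x y, x ∈ Set.Icc u v → y ∈ Set.Icc u v → x < y →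
        dist (h x) (h y) ≤ K * dist x y := by
      intro x y hx hy hxy
      have hb := rdAux_slope_bounds hc (c := u - 1) (d := v + 1)
        (by linarith [hx.1]) hxy (by linarith [hy.2])
      have habs : |(h y - h x) / (y - x)| ≤ K := by
        rw [abs_le]
        constructor
        · have : -K ≤ rdAux h (u - 1) := neg_le_of_abs_le (le_max_left _ _) |>.trans_eq rfl
          linarith [hb.1]
        · have : rdAux h (v + 1) ≤ K := (le_abs_self _).trans (le_max_right _ _)
          linarith [hb.2]
      rw [Real.dist_eq, Real.dist_eq]
      have hyx : 0 < y - x := by linarith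
      rw [abs_div, abs_of_pos hyx, div_le_iff₀ hyx] at habs
      calc |h x - h y| = |h y - h x| := abs_sub_comm _ _
        _ ≤ K * (y - x) := habs
        _ = K * |x - y| := by rw [abs_sub_comm, abs_of_pos hyx]
    intro x hx y hy
    rcases lt_trichotomy x y with hxy | rfl | hxy
    · exact main x y hx hy hxy
    · simp only [dist_self]; positivity
    · rw [dist_comm, dist_comm x y]; exact main y x hy hx hxy
  have hlip : LipschitzOnWith (Real.toNNReal K) h (Set.Icc u v) := by
    apply LipschitzOnWith.of_dist_le_mul
    intro x hx y hy
    calc dist (h x) (h y) ≤ K * dist x y := key x hx y hy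
      _ = (Real.toNNReal K : ℝ) * dist x y := by rw [Real.coe_toNNReal _ hK0]
  exact hlip.continuousOn

lemma rdAux_ftc (u v : ℝ) : ∫ t in u..v, rdAux h t = h v - h u := by
  have main : ∀ u v : ℝ, u ≤ v → ∫ t in u..v, rdAux h t = h v - h u := by
    intro u v huv
    apply intervalIntegral.integral_eq_sub_of_hasDeriv_right_of_le huv
      (rdAux_continuousOn hc u v)
      (fun x _ => rdAux_hasDerivWithinAt hc x)
      ((rdAux_mono hc).intervalIntegrable)
  rcases le_total u v with huv | hvu
  · exact main u v huv
  · rw [intervalIntegral.integral_symm, main v u hvu]; ring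

end rdAux

theorem stmt2 (a b : ℝ) (hab : a < b)
    (μ ν : Measure ℝ) [IsProbabilityMeasure μ] [IsProbabilityMeasure ν]
    [NullSingletonClass μ] (hμsupp : μ (Set.Icc a b)ᶜ = 0)
    (h : ℝ → ℝ) (hconv : ConvexOn ℝ Set.univ h)
    (T : ℝ → ℝ) (hTmono : MonotoneOn T (Set.Icc a b)) (hTm : Measurable T)
    (hTpush : Measure.map T μ = ν)
    (S : ℝ → ℝ) (hSm : Measurable S) (hSpush : Measure.map S μ = ν)
    (hTint : Integrable (fun x => h (T x - x)) μ)
    (hSint : Integrable (fun x => h (S x - x)) μ) :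
    ∫ x, h (T x - x) ∂μ ≤ ∫ x, h (S x - x) ∂μ := by
  classical
  -- generalized inverse of T
  set X : ℝ → ℝ := fun t => sSup (insert a {x | x ∈ Set.Icc a b ∧ T x ≤ t}) with hXdef
  have hXbdd : ∀ t, BddAbove (insert a {x | x ∈ Set.Icc a b ∧ T x ≤ t}) := by
    intro t
    refine ⟨b, ?_⟩
    rintro y (rfl | ⟨⟨_, hyb⟩, _⟩)
    · exact hab.le
    · exact hyb
  have hXmem : ∀ t, X t ∈ Set.Icc a b := by
    intro t
    constructor
    · exact le_csSup (hXbdd t) (Set.mem_insert _ _)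
    · exact csSup_le ⟨a, Set.mem_insert _ _⟩ (by rintro y (rfl | ⟨⟨_, hyb⟩, _⟩) <;> [exact hab.le; exact hyb])
  have hXge : ∀ x ∈ Set.Icc a b, ∀ t, T x ≤ t → x ≤ X t := by
    intro x hx t ht
    exact le_csSup (hXbdd t) (Set.mem_insert_of_mem _ ⟨hx, ht⟩)
  have hXle : ∀ x ∈ Set.Icc a b, ∀ t, t < T x → X t ≤ x := by
    intro x hx t ht
    apply csSup_le ⟨a, Set.mem_insert _ _⟩
    rintro y (rfl | ⟨hy, hTy⟩)
    · exact hx.1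
    · by_contra hcon
      push_neg at hcon
      exact absurd (hTmono hx hy hcon.le) (by linarith)
  have hXmono : Monotone X := by
    intro t t' htt'
    apply csSup_le_csSup (hXbdd t') ⟨a, Set.mem_insert _ _⟩
    apply Set.insert_subset_insert
    rintro y ⟨hy, hTy⟩
    exact ⟨hy, hTy.trans htt'⟩
  -- the integrand of the potential
  set m : ℝ → ℝ := fun t => rdAux h (t - X t) with hmdef
  have hm_lb : ∀ t, rdAux h (t - b) ≤ m t := fun t =>
    rdAux_mono hconv (by linarith [(hXmem t).2])
  have hm_ub : ∀ t, m t ≤ rdAux h (t - a) := fun t =>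
    rdAux_mono hconv (by linarith [(hXmem t).1])
  have hm_meas : Measurable m :=
    (rdAux_mono hconv).measurable.comp (measurable_id.sub hXmono.measurable)
  have hmint : ∀ u v : ℝ, IntervalIntegrable m volume u v := by
    intro u v
    rw [intervalIntegrable_iff]
    set C : ℝ := max |rdAux h (min u v - b)| |rdAux h (max u v - a)| with hC
    apply Integrable.mono' (g := fun _ => C)
      (integrableOn_const measure_Ioc_lt_top.ne)
      hm_meas.aestronglyMeasurable
    apply ae_restrict_of_forall_mem measurableSet_uIoc
    intro t ht
    rw [Set.uIoc_eq_union] at ht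
    have ht1 : min u v ≤ t := by
      rcases ht with ht | ht
      · exact (min_le_left u v).trans ht.1.le
      · exact (min_le_right u v).trans ht.1.le
    have ht2 : t ≤ max u v := by
      rcases ht with ht | ht
      · exact ht.2.trans (le_max_right u v)
      · exact ht.2.trans (le_max_left u v)
    rw [Real.norm_eq_abs, abs_le]
    constructor
    · have h1 : rdAux h (min u v - b) ≤ m t :=
        (rdAux_mono hconv (by linarith)).trans (hm_lb t)
      have h2 : -C ≤ rdAux h (min u v - b) :=
        neg_le_of_abs_le (le_max_left _ _)
      linarith
    · have h1 : m t ≤ rdAux h (max u v - a) :=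
        (hm_ub t).trans (rdAux_mono hconv (by linarith))
      have h2 : rdAux h (max u v - a) ≤ C :=
        (le_abs_self _).trans (le_max_right _ _)
      linarith
  -- the potential
  set ψ : ℝ → ℝ := fun y => ∫ t in (0:ℝ)..y, m t with hψdef
  have hψcont : Continuous ψ := intervalIntegral.continuous_primitive hmint 0
  have hψsub : ∀ y z : ℝ, ψ z - ψ y = ∫ t in y..z, m t := by
    intro y z
    exact intervalIntegral.integral_interval_sub_left (hmint 0 z) (hmint 0 y)
  -- FTC for h with shift
  have ftcx : ∀ x u v : ℝ, ∫ t in u..v, rdAux h (t - x) = h (v - x) - h (u - x) := by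
    intro x u v
    rw [intervalIntegral.integral_comp_sub_right (fun s => rdAux h s) x]
    exact rdAux_ftc hconv _ _
  have hrdint : ∀ x u v : ℝ, IntervalIntegrable (fun t => rdAux h (t - x)) volume u v := by
    intro x u v
    exact ((rdAux_mono hconv).comp (fun s t hst => by simp [sub_le_sub_right hst x])).intervalIntegrable
  -- key pointwise inequality
  have hkey : ∀ x ∈ Set.Icc a b, ∀ y : ℝ, h (T x - x) - h (y - x) ≤ ψ (T x) - ψ y := by
    intro x hx y
    rcases le_total y (T x) with hy | hy
    · -- y ≤ T x : need ∫ y..Tx rd(t-x) ≤ ∫ y..Tx m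
      have hmono : ∫ t in y..(T x), rdAux h (t - x) ≤ ∫ t in y..(T x), m t := by
        apply intervalIntegral.integral_mono_ae_restrict hy (hrdint x y (T x)) (hmint y (T x))
        rw [Filter.EventuallyLE, ae_restrict_iff' measurableSet_Icc]
        have : {t : ℝ | ¬ (t ∈ Set.Icc y (T x) → rdAux h (t - x) ≤ m t)} ⊆ {T x} := by
          intro t ht
          simp only [Set.mem_setOf_eq, not_forall] at ht
          obtain ⟨htmem, hlt⟩ := ht
          by_contra hne
          simp only [Set.mem_singleton_iff] at hne
          have htlt : t < T x := lt_of_le_of_ne htmem.2 hne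
          exact hlt (rdAux_mono hconv (by linarith [hXle x hx t htlt]))
        rw [ae_iff]
        exact measure_mono_null this (measure_singleton _)
      have e1 := ftcx x y (T x)
      have e2 := hψsub y (T x)
      linarith
    · -- T x ≤ y : need ∫ Tx..y m ≤ ∫ Tx..y rd(t-x)
      have hmono : ∫ t in (T x)..y, m t ≤ ∫ t in (T x)..y, rdAux h (t - x) := by
        apply intervalIntegral.integral_mono_on hy (hmint (T x) y) (hrdint x (T x) y)
        intro t ht
        exact rdAux_mono hconv (by linarith [hXge x hx t ht.1])
      have e1 := ftcx x (T x) y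
      have e2 := hψsub (T x) y
      linarith
  -- a.e. version
  have hae : ∀ᵐ x ∂μ, x ∈ Set.Icc a b := by
    rw [ae_iff]
    have : {x : ℝ | ¬ x ∈ Set.Icc a b} = (Set.Icc a b)ᶜ := rfl
    rw [this]
    exact hμsupp
  have hkey2 : ∀ᵐ x ∂μ, h (T x - x) - h (S x - x) ≤ ψ (T x) - ψ (S x) := by
    filter_upwards [hae] with x hx
    exact hkey x hx (S x)
  -- truncation
  set ρ : ℕ → ℝ → ℝ := fun N u => max (-(N:ℝ)) (min u N) with hρdef
  have hρ_abs : ∀ N u, |ρ N u| ≤ N := by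
    intro N u
    rw [abs_le]
    constructor
    · exact le_max_left _ _
    · exact max_le (neg_le_self (Nat.cast_nonneg N)) ((min_le_right _ _))
  have hρ_mono : ∀ N, Monotone (ρ N) := by
    intro N u v huv
    exact max_le_max le_rfl (min_le_min huv le_rfl)
  have hρ_lip : ∀ N u v, v ≤ u → ρ N u - ρ N v ≤ u - v := by
    intro N u v huv
    have h1 : ρ N v ≤ ρ N u := hρ_mono N huv
    have h2 : |ρ N u - ρ N v| ≤ |u - v| := by
      simp only [hρdef]
      rw [max_comm (-(N:ℝ)) (min u (N:ℝ)), max_comm (-(N:ℝ)) (min v (N:ℝ))]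
      refine (abs_max_sub_max_le_abs _ _ _).trans ?_
      refine (abs_min_sub_min_le_max _ _ _ _).trans ?_
      simp
    rw [abs_of_nonneg (by linarith), abs_of_nonneg (by linarith)] at h2
    exact h2
  have hρ_id : ∀ (N : ℕ) (u : ℝ), |u| ≤ (N:ℝ) → ρ N u = u := by
    intro N u hu
    rw [abs_le] at hu
    simp only [hρdef]
    rw [min_eq_left hu.2, max_eq_right hu.1]
  have hρ_cont : ∀ N, Continuous (ρ N) :=
    fun N => continuous_const.max (continuous_id.min continuous_const)
  -- integrals of truncated potential agree
  have hρTmeas : ∀ N, Measurable fun x => ρ N (ψ (T x)) :=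
    fun N => ((hρ_cont N).comp hψcont).measurable.comp hTm
  have hρSmeas : ∀ N, Measurable fun x => ρ N (ψ (S x)) :=
    fun N => ((hρ_cont N).comp hψcont).measurable.comp hSm
  have hρTint : ∀ N, Integrable (fun x => ρ N (ψ (T x))) μ := by
    intro N
    apply Integrable.mono' (integrable_const (N:ℝ)) (hρTmeas N).aestronglyMeasurable
    exact ae_of_all _ fun x => (Real.norm_eq_abs _) ▸ hρ_abs N _
  have hρSint : ∀ N, Integrable (fun x => ρ N (ψ (S x))) μ := by
    intro N
    apply Integrable.mono' (integrable_const (N:ℝ)) (hρSmeas N).aestronglyMeasurable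
    exact ae_of_all _ fun x => (Real.norm_eq_abs _) ▸ hρ_abs N _
  have hρeq : ∀ N, ∫ x, ρ N (ψ (T x)) ∂μ = ∫ x, ρ N (ψ (S x)) ∂μ := by
    intro N
    have hmeas : AEStronglyMeasurable (fun y => ρ N (ψ y)) ν :=
      ((hρ_cont N).comp hψcont).aestronglyMeasurable
    have hT' : ∫ x, ρ N (ψ (T x)) ∂μ = ∫ y, ρ N (ψ y) ∂ν := by
      rw [← hTpush, integral_map hTm.aemeasurable (hTpush ▸ hmeas)]
    have hS' : ∫ x, ρ N (ψ (S x)) ∂μ = ∫ y, ρ N (ψ y) ∂ν := by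
      rw [← hSpush, integral_map hSm.aemeasurable (hSpush ▸ hmeas)]
    rw [hT', hS']
  -- the functions
  set g : ℝ → ℝ := fun x => h (T x - x) - h (S x - x) with hgdef
  have hgint : Integrable g μ := hTint.sub hSint
  set F : ℕ → ℝ → ℝ := fun N x => min (g x) (ρ N (ψ (T x)) - ρ N (ψ (S x))) with hFdef
  have hdNint : ∀ N, Integrable (fun x => ρ N (ψ (T x)) - ρ N (ψ (S x))) μ :=
    fun N => (hρTint N).sub (hρSint N)
  have hFint : ∀ N, Integrable (F N) μ := by
    intro N
    exact hgint.inf (hdNint N)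
  have hFle : ∀ N, ∫ x, F N x ∂μ ≤ 0 := by
    intro N
    have h1 : ∫ x, F N x ∂μ ≤ ∫ x, (ρ N (ψ (T x)) - ρ N (ψ (S x))) ∂μ :=
      integral_mono (hFint N) (hdNint N) (fun x => min_le_right _ _)
    have h2 : ∫ x, (ρ N (ψ (T x)) - ρ N (ψ (S x))) ∂μ = 0 := by
      rw [integral_sub (hρTint N) (hρSint N), hρeq N, sub_self]
    linarith
  -- domination
  have hbound : ∀ N, ∀ᵐ x ∂μ, ‖F N x‖ ≤ |g x| := by
    intro N
    filter_upwards [hkey2] with x hx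
    have hgx : g x = h (T x - x) - h (S x - x) := rfl
    rw [Real.norm_eq_abs, abs_le]
    constructor
    · have hdN : min (g x) 0 ≤ ρ N (ψ (T x)) - ρ N (ψ (S x)) := by
        rcases le_total (ψ (S x)) (ψ (T x)) with hc | hc
        · have : 0 ≤ ρ N (ψ (T x)) - ρ N (ψ (S x)) := by linarith [hρ_mono N hc]
          exact (min_le_right _ _).trans this
        · have := hρ_lip N (ψ (S x)) (ψ (T x)) hc
          have : ψ (T x) - ψ (S x) ≤ ρ N (ψ (T x)) - ρ N (ψ (S x)) := by linarith
          exact (min_le_left _ _).trans (by rw [hgx]; linarith)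
      have : min (g x) 0 ≤ F N x := le_min (min_le_left _ _) hdN
      have h0 : -|g x| ≤ min (g x) 0 := le_min (neg_abs_le _) (neg_nonpos.mpr (abs_nonneg _))
      linarith
    · exact (min_le_left _ _).trans (le_abs_self _)
  -- pointwise limit
  have hlim : ∀ᵐ x ∂μ, Tendsto (fun N => F N x) atTop (𝓝 (g x)) := by
    filter_upwards [hkey2] with x hx
    have hgx : g x = h (T x - x) - h (S x - x) := rfl
    apply Tendsto.congr' _ tendsto_const_nhds
    rw [Filter.EventuallyEq, Filter.eventually_atTop]
    refine ⟨⌈max |ψ (T x)| |ψ (S x)|⌉₊, fun N hN => ?_⟩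
    have hNr : max |ψ (T x)| |ψ (S x)| ≤ (N : ℝ) :=
      (Nat.le_ceil _).trans (Nat.cast_le.mpr hN)
    show g x = min (g x) (ρ N (ψ (T x)) - ρ N (ψ (S x)))
    rw [hρ_id N _ ((le_max_left _ _).trans hNr), hρ_id N _ ((le_max_right _ _).trans hNr)]
    exact (min_eq_left (by rw [hgx]; linarith)).symm
  -- dominated convergence
  have htend : Tendsto (fun N => ∫ x, F N x ∂μ) atTop (𝓝 (∫ x, g x ∂μ)) := by
    apply tendsto_integral_of_dominated_convergence (fun x => |g x|)
      (fun N => ((hFint N).aestronglyMeasurable))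
      hgint.abs hbound hlim
  have hfinal : ∫ x, g x ∂μ ≤ 0 :=
    le_of_tendsto htend (Filter.Eventually.of_forall hFle)
  rw [hgdef] at hfinal
  rw [integral_sub hTint hSint] at hfinal
  linarith
end

section
/- Suppose (φ, ψ) ∈ H¹(0, π/2)² satisfies at each θ the constraint that the point φ(θ)x̂(θ) + ψ(θ)x̂^⊥(θ) lies in Ω' = {(r,θ') : R₁(θ') < r < R₂(θ')}, where x̂(θ) = (cos θ, sin θ), R₁ Lipschitz with inf R₁ > 0. Define h(θ) = max(R₁(θ) − φ(θ), 0). Then 0 ≤ h(θ) ≤ B₁ |ψ(θ)| for all θ, with B₁ = (π/2)(Lip R₁)/(inf R₁) + 1. -/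
open MeasureTheory

theorem stmt18 (R₁ R₂ : ℝ → ℝ) (L : NNReal) (hLip : LipschitzWith L R₁)
    (iR : ℝ) (hiR : 0 < iR) (hiR' : ∀ θ, iR ≤ R₁ θ)
    (φ ψ : ℝ → ℝ)
    -- the point φ(θ) x̂(θ) + ψ(θ) x̂⊥(θ) lies in Ω'
    (hconstr : ∀ θ ∈ Set.Icc 0 (Real.pi / 2),
      0 < (↑(φ θ) * Complex.exp (↑θ * Complex.I)
            + ↑(ψ θ) * (Complex.I * Complex.exp (↑θ * Complex.I))).arg ∧
      (↑(φ θ) * Complex.exp (↑θ * Complex.I)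
            + ↑(ψ θ) * (Complex.I * Complex.exp (↑θ * Complex.I))).arg < Real.pi / 2 ∧
      R₁ ((↑(φ θ) * Complex.exp (↑θ * Complex.I)
            + ↑(ψ θ) * (Complex.I * Complex.exp (↑θ * Complex.I))).arg) <
        ‖(↑(φ θ) * Complex.exp (↑θ * Complex.I)
            + ↑(ψ θ) * (Complex.I * Complex.exp (↑θ * Complex.I)) : ℂ)‖ ∧
      ‖(↑(φ θ) * Complex.exp (↑θ * Complex.I)
            + ↑(ψ θ) * (Complex.I * Complex.exp (↑θ * Complex.I)) : ℂ)‖ <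
        R₂ ((↑(φ θ) * Complex.exp (↑θ * Complex.I)
            + ↑(ψ θ) * (Complex.I * Complex.exp (↑θ * Complex.I))).arg)) :
    ∀ θ ∈ Set.Icc 0 (Real.pi / 2),
      max (R₁ θ - φ θ) 0 ≤ ((Real.pi / 2) * (L : ℝ) / iR + 1) * |ψ θ| := by
  intro θ hθ
  obtain ⟨hθ0, hθπ⟩ := hθ
  obtain ⟨h1, h2, h3, _⟩ := hconstr θ ⟨hθ0, hθπ⟩
  set z : ℂ := ↑(φ θ) * Complex.exp (↑θ * Complex.I)
            + ↑(ψ θ) * (Complex.I * Complex.exp (↑θ * Complex.I)) with hz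
  set δ : ℝ := z.arg - θ with hδ
  have hpi : (0:ℝ) < Real.pi := Real.pi_pos
  have he : Complex.exp (↑θ * Complex.I) ≠ 0 := Complex.exp_ne_zero _
  have hw : (↑(φ θ) + ↑(ψ θ) * Complex.I) * Complex.exp (↑θ * Complex.I) = z := by
    rw [hz]; ring
  have hwe : (↑(φ θ) + ↑(ψ θ) * Complex.I)
      = (↑‖z‖ : ℂ) * Complex.exp (↑δ * Complex.I) := by
    apply mul_right_cancel₀ he
    rw [hw, mul_assoc, ← Complex.exp_add]
    have : (↑δ * Complex.I + ↑θ * Complex.I) = ↑z.arg * Complex.I := by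
      rw [hδ]; push_cast; ring
    rw [this, Complex.norm_mul_exp_arg_mul_I]
  have hre := congrArg Complex.re hwe
  have him := congrArg Complex.im hwe
  simp [Complex.exp_mul_I, Complex.add_re, Complex.add_im, Complex.mul_re, Complex.mul_im,
    Complex.cos_ofReal_re, Complex.sin_ofReal_re] at hre him
  -- hre : φ θ = |z| * cos δ, him : ψ θ = |z| * sin δ
  have hδlb : -(Real.pi / 2) < δ := by
    rw [hδ]; linarith
  have hδub : δ < Real.pi / 2 := by
    rw [hδ]; linarith
  have hcos : 0 ≤ Real.cos δ :=
    Real.cos_nonneg_of_mem_Icc ⟨le_of_lt hδlb, le_of_lt hδub⟩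
  have hcos1 : Real.cos δ ≤ 1 := Real.cos_le_one δ
  have hsc : Real.sin δ ^ 2 + Real.cos δ ^ 2 = 1 := Real.sin_sq_add_cos_sq δ
  have habsz : 0 ≤ ‖z‖ := norm_nonneg z
  have hzlb : iR ≤ ‖z‖ := le_trans (hiR' z.arg) (le_of_lt h3)
  -- |δ| ≤ (π/2) |sin δ|
  have hsinabs : |Real.sin δ| = Real.sin |δ| := by
    rcases le_or_gt 0 δ with h | h
    · rw [abs_of_nonneg h, abs_of_nonneg (Real.sin_nonneg_of_nonneg_of_le_pi h (by linarith))]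
    · have hs : Real.sin δ ≤ 0 := by
        have h0 : 0 ≤ Real.sin (-δ) := Real.sin_nonneg_of_nonneg_of_le_pi (by linarith) (by linarith)
        rw [Real.sin_neg] at h0; linarith
      rw [abs_of_neg h, Real.sin_neg, abs_of_nonpos hs]
  have hδsin : |δ| ≤ (Real.pi / 2) * |Real.sin δ| := by
    rw [hsinabs]
    have h1 := Real.mul_le_sin (abs_nonneg δ) (by rw [abs_le]; constructor <;> linarith)
    have h2 : 0 < 2 / Real.pi := by positivity
    calc |δ| = (Real.pi / 2) * (2 / Real.pi * |δ|) := by field_simp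
    _ ≤ (Real.pi / 2) * Real.sin |δ| := by
        apply mul_le_mul_of_nonneg_left h1 (by positivity)
  -- Lipschitz estimate
  have hLipest : R₁ θ - R₁ z.arg ≤ (L : ℝ) * |δ| := by
    have := hLip.dist_le_mul θ z.arg
    rw [Real.dist_eq, Real.dist_eq] at this
    have h' : |θ - z.arg| = |δ| := by rw [hδ, abs_sub_comm]
    rw [h'] at this
    calc R₁ θ - R₁ z.arg ≤ |R₁ θ - R₁ z.arg| := le_abs_self _
    _ ≤ (L : ℝ) * |δ| := this
  -- |ψ| = |z| * |sin δ|
  have hψabs : |ψ θ| = ‖z‖ * |Real.sin δ| := by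
    rw [him, abs_mul, abs_of_nonneg habsz]
  -- |z| - φ ≤ |ψ|
  have hkey : ‖z‖ - φ θ ≤ |ψ θ| := by
    rw [hre, hψabs]
    have : 1 - Real.cos δ ≤ |Real.sin δ| := by
      nlinarith [abs_nonneg (Real.sin δ), sq_abs (Real.sin δ)]
    nlinarith
  apply max_le _ (by positivity)
  -- main chain
  have hL : (0:ℝ) ≤ (L : ℝ) := L.coe_nonneg
  have hchain : R₁ θ - φ θ ≤ (L : ℝ) * ((Real.pi / 2) * |Real.sin δ|) + |ψ θ| := by
    have := hLipest
    nlinarith [mul_le_mul_of_nonneg_left hδsin hL]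
  have hdiv : (L : ℝ) * ((Real.pi / 2) * |Real.sin δ|) ≤ (Real.pi / 2) * (L : ℝ) / iR * |ψ θ| := by
    rw [hψabs, div_mul_eq_mul_div (Real.pi / 2 * (L : ℝ)) iR (‖z‖ * |Real.sin δ|),
      le_div_iff₀ hiR]
    have h5 : (0:ℝ) ≤ (L:ℝ) * (Real.pi/2) * |Real.sin δ| := by positivity
    nlinarith [mul_le_mul_of_nonneg_left hzlb h5]
  linarith [hchain, hdiv]
end
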